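/- For all natural numbers m, r, n with n ≥ 1 and all real x ≠ 0, H_{m+r,n}(x) = m! · Σ_{k=0}^{m} ((−1)^k / k!) · (H_{m−k,n}(x) / (m−k)!) · f^{(k)}(x), where f^{(k)} denotes the k-th iterated derivative of the real function f(t) = t^{−n}·H_{r,n}(t) on ℝ \ {0}. -/

import Mathlib

open Polynomial Finset

/-- The operator `A p = 2·X·p − p′`. -/
noncomputable def A (p : ℝ[X]) : ℝ[X] := 2 * X * p - derivative p

/-- The two-index Hermite polynomial `H_{m,n} = A^m (X^n)`. -/
noncomputable def H (m n : ℕ) : ℝ[X] := A^[m] (X ^ n)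

/-- The auxiliary function `f(t) = t^{-n} H_{r,n}(t)`. -/
noncomputable def fB (r n : ℕ) : ℝ → ℝ := fun t : ℝ => t ^ (-(n : ℤ)) * (H r n).eval t

lemma H_succ (m n : ℕ) : H (m + 1) n = 2 * X * H m n - derivative (H m n) := by
  rw [H, Function.iterate_succ_apply', ← H]; rfl

lemma H_succ_eval (m n : ℕ) (x : ℝ) :
    (H (m + 1) n).eval x = 2 * x * (H m n).eval x - (derivative (H m n)).eval x := by
  rw [H_succ]; simp [eval_sub, eval_mul]

lemma fB_poly (r n k : ℕ) : ∃ q : ℝ[X], ∀ y : ℝ, y ≠ 0 →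
    iteratedDeriv k (fB r n) y = y ^ (-(n : ℤ) - k) * q.eval y := by
  induction k with
  | zero =>
    exact ⟨H r n, fun y hy => by simp [fB, iteratedDeriv_zero]⟩
  | succ k ih =>
    obtain ⟨q, hq⟩ := ih
    refine ⟨C ((-(n : ℤ) - k : ℤ) : ℝ) * q + X * derivative q, fun y hy => ?_⟩
    rw [iteratedDeriv_succ]
    have hev : iteratedDeriv k (fB r n) =ᶠ[nhds y]
        fun t : ℝ => t ^ (-(n : ℤ) - k) * q.eval t := by
      filter_upwards [isOpen_compl_singleton.mem_nhds hy] with t ht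
      exact hq t ht
    rw [hev.deriv_eq]
    have h1 : HasDerivAt (fun t : ℝ => t ^ (-(n : ℤ) - k) * q.eval t)
        (((-(n : ℤ) - k : ℤ) : ℝ) * y ^ (-(n : ℤ) - k - 1) * q.eval y
          + y ^ (-(n : ℤ) - k) * (derivative q).eval y) y :=
      (hasDerivAt_zpow _ y (Or.inl hy)).mul (Polynomial.hasDerivAt q y)
    rw [h1.deriv]
    have he : -(n : ℤ) - ((k : ℕ) + 1 : ℕ) = -(n : ℤ) - k - 1 := by push_cast; ring
    rw [he]
    have hy' : y ^ (-(n : ℤ) - k) = y ^ (-(n : ℤ) - k - 1) * y := by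
      conv_lhs => rw [show -(n : ℤ) - k = (-(n : ℤ) - k - 1) + 1 by ring, zpow_add_one₀ hy]
    rw [hy']
    simp only [eval_add, eval_mul, eval_C, eval_X]
    push_cast
    ring

lemma fB_diff (r n k : ℕ) (x : ℝ) (hx : x ≠ 0) :
    DifferentiableAt ℝ (iteratedDeriv k (fB r n)) x := by
  obtain ⟨q, hq⟩ := fB_poly r n k
  have hev : iteratedDeriv k (fB r n) =ᶠ[nhds x]
      fun t : ℝ => t ^ (-(n : ℤ) - k) * q.eval t := by
    filter_upwards [isOpen_compl_singleton.mem_nhds hx] with t ht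
    exact hq t ht
  rw [hev.differentiableAt_iff]
  exact (differentiableAt_zpow.2 (Or.inl hx)).mul (q.differentiableAt)

lemma hasDerivAt_iteratedDeriv_fB (r n k : ℕ) (x : ℝ) (hx : x ≠ 0) :
    HasDerivAt (iteratedDeriv k (fB r n)) (iteratedDeriv (k + 1) (fB r n) x) x := by
  have h := (fB_diff r n k x hx).hasDerivAt
  rwa [← iteratedDeriv_succ] at h

lemma coeff_id (m j : ℕ) (hj : j < m) :
    ((m + 1).factorial : ℝ) * ((-1) ^ (j + 1) / ((j + 1).factorial * (m + 1 - (j + 1)).factorial))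
      = (m.factorial : ℝ) * ((-1) ^ (j + 1) / ((j + 1).factorial * (m - (j + 1)).factorial))
        - (m.factorial : ℝ) * ((-1) ^ j / (j.factorial * (m - j).factorial)) := by
  obtain ⟨i, hi⟩ := Nat.exists_eq_add_of_lt hj
  subst hi
  rw [show j + i + 1 + 1 - (j + 1) = i + 1 by omega,
      show j + i + 1 - (j + 1) = i by omega,
      show j + i + 1 - j = i + 1 by omega,
      show j + i + 1 + 1 = (j + i + 1) + 1 by ring]
  rw [Nat.factorial_succ (j + i + 1), Nat.factorial_succ j, Nat.factorial_succ i]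
  have h1 : (j.factorial : ℝ) ≠ 0 := Nat.cast_ne_zero.2 j.factorial_ne_zero
  have h2 : (i.factorial : ℝ) ≠ 0 := Nat.cast_ne_zero.2 i.factorial_ne_zero
  have h3 : ((j : ℝ) + 1) ≠ 0 := by positivity
  have h4 : ((i : ℝ) + 1) ≠ 0 := by positivity
  push_cast
  field_simp
  ring

lemma key (r n : ℕ) : ∀ m : ℕ, ∀ x : ℝ, x ≠ 0 →
    (H (m + r) n).eval x = ∑ k ∈ range (m + 1),
      ((m.factorial : ℝ) * ((-1) ^ k / (k.factorial * (m - k).factorial))) *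
        ((H (m - k) n).eval x * iteratedDeriv k (fB r n) x) := by
  intro m
  induction m with
  | zero =>
    intro x hx
    simp only [Nat.zero_add, Finset.sum_range_one, Nat.sub_zero, Nat.factorial_zero,
      pow_zero, iteratedDeriv_zero]
    rw [show H 0 n = X ^ n from by simp [H], fB]
    simp only [eval_pow, eval_X, Nat.cast_one]
    rw [← zpow_natCast x n]
    rw [show x ^ (n:ℤ) * (x ^ (-(n:ℤ)) * (H r n).eval x) = (x ^ (n:ℤ) * x ^ (-(n:ℤ))) * (H r n).eval x by ring, ← zpow_add₀ hx]
    simp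
  | succ m ih =>
    intro x hx
    set f := fB r n with hf
    set b : ℕ → ℝ := fun k => (m.factorial : ℝ) * ((-1) ^ k / (k.factorial * (m - k).factorial))
      with hb
    set Fn : ℝ → ℝ := fun y => ∑ k ∈ range (m + 1),
      b k * ((H (m - k) n).eval y * iteratedDeriv k f y) with hFn
    set D : ℝ := ∑ k ∈ range (m + 1),
      b k * ((derivative (H (m - k) n)).eval x * iteratedDeriv k f x
        + (H (m - k) n).eval x * iteratedDeriv (k + 1) f x) with hD
    have hDer : HasDerivAt Fn D x := by
      apply HasDerivAt.fun_sum
      intro k hk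
      exact ((Polynomial.hasDerivAt _ x).mul
        (hasDerivAt_iteratedDeriv_fB r n k x hx)).const_mul (b k)
    have hev : (fun y : ℝ => (H (m + r) n).eval y) =ᶠ[nhds x] Fn := by
      filter_upwards [isOpen_compl_singleton.mem_nhds hx] with t ht
      exact ih t ht
    have hEq : (derivative (H (m + r) n)).eval x = D :=
      (Polynomial.hasDerivAt _ x).unique (hDer.congr_of_eventuallyEq hev)
    have hstart : (H (m + 1 + r) n).eval x
        = 2 * x * (H (m + r) n).eval x - (derivative (H (m + r) n)).eval x := by
      rw [show m + 1 + r = (m + r) + 1 by ring, H_succ_eval]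
    rw [hstart, ih x hx, hEq, hD]
    -- Combine into two sums
    have hcomb : 2 * x * (∑ k ∈ range (m + 1),
          b k * ((H (m - k) n).eval x * iteratedDeriv k f x))
        - ∑ k ∈ range (m + 1),
          b k * ((derivative (H (m - k) n)).eval x * iteratedDeriv k f x
            + (H (m - k) n).eval x * iteratedDeriv (k + 1) f x)
        = (∑ k ∈ range (m + 1), b k * ((H (m + 1 - k) n).eval x * iteratedDeriv k f x))
          - ∑ k ∈ range (m + 1),
            b k * ((H (m + 1 - (k + 1)) n).eval x * iteratedDeriv (k + 1) f x) := by
      rw [Finset.mul_sum, ← Finset.sum_sub_distrib, ← Finset.sum_sub_distrib]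
      apply Finset.sum_congr rfl
      intro k hk
      have hk' : k ≤ m := by simpa [Nat.lt_succ_iff] using hk
      have h1 : m + 1 - k = (m - k) + 1 := by omega
      have h2 : m + 1 - (k + 1) = m - k := by omega
      rw [h1, h2, H_succ_eval]
      ring
    rw [hcomb]
    -- The combinatorial reindexing
    set u : ℕ → ℝ := fun k => (H (m + 1 - k) n).eval x * iteratedDeriv k f x with hu
    set a : ℕ → ℝ := fun k =>
      ((m + 1).factorial : ℝ) * ((-1) ^ k / (k.factorial * (m + 1 - k).factorial)) with ha
    show (∑ k ∈ range (m + 1), b k * u k) - ∑ k ∈ range (m + 1), b k * u (k + 1)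
        = ∑ k ∈ range (m + 1 + 1), a k * u k
    rw [Finset.sum_range_succ' (fun k => a k * u k) (m + 1),
        Finset.sum_range_succ (fun k => a (k + 1) * u (k + 1)) m,
        Finset.sum_range_succ' (fun k => b k * u k) m,
        Finset.sum_range_succ (fun k => b k * u (k + 1)) m]
    have hsum : ∑ j ∈ range m, a (j + 1) * u (j + 1)
        = ∑ j ∈ range m, (b (j + 1) * u (j + 1) - b j * u (j + 1)) := by
      apply Finset.sum_congr rfl
      intro j hj
      have := coeff_id m j (Finset.mem_range.1 hj)
      rw [ha, hb]
      dsimp only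
      rw [this]
      ring
    rw [hsum, Finset.sum_sub_distrib]
    have h0 : a 0 = b 0 := by
      rw [ha, hb]; simp [Nat.factorial]; field_simp
    have hm : a (m + 1) = -(b m) := by
      rw [ha, hb]
      simp only [Nat.sub_self, Nat.add_sub_cancel_left, Nat.factorial_zero, Nat.cast_one,
        Nat.add_sub_cancel]
      have hfac : ((m + 1).factorial : ℝ) ≠ 0 := Nat.cast_ne_zero.2 (m + 1).factorial_ne_zero
      have hfac2 : (m.factorial : ℝ) ≠ 0 := Nat.cast_ne_zero.2 m.factorial_ne_zero
      rw [pow_succ]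
      field_simp
    rw [h0, hm]
    ring

theorem hmn_burchnall (m r n : ℕ) (hn : 1 ≤ n) (x : ℝ) (hx : x ≠ 0) :
    (H (m + r) n).eval x =
      (m.factorial : ℝ) *
        ∑ k ∈ range (m + 1),
          ((-1 : ℝ) ^ k / (k.factorial : ℝ)) *
            ((H (m - k) n).eval x / ((m - k).factorial : ℝ)) *
            iteratedDeriv k (fun t : ℝ => t ^ (-(n : ℤ)) * (H r n).eval t) x := by
  rw [key r n m x hx, Finset.mul_sum]
  apply Finset.sum_congr rfl
  intro k hk
  rw [show (fun t : ℝ => t ^ (-(n : ℤ)) * (H r n).eval t) = fB r n from rfl]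
  ring
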